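/- Let A ∈ C^{m×n} and B ∈ C^{n×ℓ} with A^[†] and B^[†] existing, D = AB. If B B^[†] A^[*] A B = A^[*] A B and A^[†] A B B^[*] A^[*] = B B^[*] A^[*], then rank([[D, A A^[*] D],[D B^[*] B, D D^[*] D]]) = rank(D). -/

import Mathlib

open Matrix

/-- The weighted (MN-) adjoint `A^[*] = N⁻¹ Aᴴ M` of a matrix between
indefinite inner product spaces with weights `M` (output) and `N` (input). -/
noncomputable def wadj {m n : ℕ} (M : Matrix (Fin m) (Fin m) ℂ)
    (N : Matrix (Fin n) (Fin n) ℂ) (A : Matrix (Fin m) (Fin n) ℂ) :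
    Matrix (Fin n) (Fin m) ℂ := N⁻¹ * Aᴴ * M

/-- `X` is the weighted Moore-Penrose inverse of `A` w.r.t. weights `M`, `N`:
the four weighted Penrose equations. -/
def IsWMP {m n : ℕ} (M : Matrix (Fin m) (Fin m) ℂ)
    (N : Matrix (Fin n) (Fin n) ℂ) (A : Matrix (Fin m) (Fin n) ℂ)
    (X : Matrix (Fin n) (Fin m) ℂ) : Prop :=
  A * X * A = A ∧ X * A * X = X ∧
    wadj M M (A * X) = A * X ∧ wadj N N (X * A) = X * A

theorem stmt_11 {m n l : ℕ} (M : Matrix (Fin m) (Fin m) ℂ) (N : Matrix (Fin n) (Fin n) ℂ)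
    (L : Matrix (Fin l) (Fin l) ℂ)
    (hM : M.IsHermitian) (hMu : IsUnit M) (hN : N.IsHermitian) (hNu : IsUnit N)
    (hL : L.IsHermitian) (hLu : IsUnit L)
    (A : Matrix (Fin m) (Fin n) ℂ) (B : Matrix (Fin n) (Fin l) ℂ)
    (X : Matrix (Fin n) (Fin m) ℂ) (Y : Matrix (Fin l) (Fin n) ℂ)
    (hX : IsWMP M N A X) (hY : IsWMP N L B Y)
    (h1 : B * Y * (wadj M N A * A * B) = wadj M N A * A * B)
    (h2 : X * A * (B * wadj N L B * wadj M N A) = B * wadj N L B * wadj M N A) :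
    (Matrix.fromBlocks (A * B) (A * wadj M N A * (A * B))
        (A * B * (wadj N L B * B)) (A * B * wadj M L (A * B) * (A * B))).rank =
      (A * B).rank := by
  obtain ⟨hX1, hX2, hX3, hX4⟩ := hX
  have hMd : IsUnit M.det := (Matrix.isUnit_iff_isUnit_det M).mp hMu
  have hNd : IsUnit N.det := (Matrix.isUnit_iff_isUnit_det N).mp hNu
  have hLd : IsUnit L.det := (Matrix.isUnit_iff_isUnit_det L).mp hLu
  have hNc : ∀ (k : ℕ) (Z : Matrix (Fin n) (Fin k) ℂ), N * (N⁻¹ * Z) = Z :=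
    fun k Z => Matrix.mul_nonsing_inv_cancel_left N Z hNd
  have hNc' : ∀ (k : ℕ) (Z : Matrix (Fin n) (Fin k) ℂ), N⁻¹ * (N * Z) = Z :=
    fun k Z => Matrix.nonsing_inv_mul_cancel_left N Z hNd
  have hM1 : M * M⁻¹ = 1 := Matrix.mul_nonsing_inv M hMd
  -- hXA generalized: Aᴴ * (Xᴴ * (N * Z)) = N * (X * (A * Z))
  have hXA : Aᴴ * (Xᴴ * N) = N * (X * A) := by
    have h := congrArg (fun Z => N * Z) hX4
    simp only [wadj, Matrix.mul_assoc, hNc, Matrix.conjTranspose_mul] at h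
    exact h
  have hXAZ : ∀ (k : ℕ) (Z : Matrix (Fin n) (Fin k) ℂ),
      Aᴴ * (Xᴴ * (N * Z)) = N * (X * (A * Z)) := by
    intro k Z
    have h := congrArg (fun W => W * Z) hXA
    simpa only [Matrix.mul_assoc] using h
  -- process h1
  have h1' : B * (Y * (N⁻¹ * (Aᴴ * (M * (A * B))))) = N⁻¹ * (Aᴴ * (M * (A * B))) := by
    have h := h1
    simp only [wadj, Matrix.mul_assoc] at h
    exact h
  -- process h2 into key2
  have h2a : X * (A * (B * (L⁻¹ * (Bᴴ * (Aᴴ * M))))) = B * (L⁻¹ * (Bᴴ * (Aᴴ * M))) := by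
    have h := h2
    simp only [wadj, Matrix.mul_assoc, hNc] at h
    exact h
  have h2b : X * (A * (B * (L⁻¹ * (Bᴴ * Aᴴ)))) = B * (L⁻¹ * (Bᴴ * Aᴴ)) := by
    have h := congrArg (fun Z => Z * M⁻¹) h2a
    simpa only [Matrix.mul_assoc, hM1, Matrix.mul_one] using h
  have h2c : A * (B * (L⁻¹ * (Bᴴ * (Aᴴ * Xᴴ)))) = A * (B * (L⁻¹ * Bᴴ)) := by
    have h := congrArg (fun Z => Zᴴ) h2b
    simpa only [Matrix.conjTranspose_mul, Matrix.conjTranspose_conjTranspose,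
      hL.inv.eq, Matrix.mul_assoc] using h
  have key2 : A * (B * (L⁻¹ * (Bᴴ * (N * (X * (A * B)))))) =
      A * (B * (L⁻¹ * (Bᴴ * (N * B)))) := by
    have h := congrArg (fun Z => Z * (N * B)) h2c
    simp only [Matrix.mul_assoc] at h
    rw [hXAZ l B] at h
    exact h
  -- the factorization pieces
  set P : Matrix (Fin m) (Fin m) ℂ := A * B * wadj N L B * X with hP
  set Q : Matrix (Fin l) (Fin l) ℂ := Y * wadj M N A * (A * B) with hQ
  have e12 : A * wadj M N A * (A * B) = (A * B) * Q := by
    simp only [hQ, wadj, Matrix.mul_assoc]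
    rw [h1']
  have e21 : A * B * (wadj N L B * B) = P * (A * B) := by
    simp only [hP, wadj, Matrix.mul_assoc]
    exact key2.symm
  have e22 : A * B * wadj M L (A * B) * (A * B) = P * (A * B) * Q := by
    have h : P * (A * B) * Q = A * B * (wadj N L B * B) * Q := by rw [← e21]
    rw [h]
    simp only [hQ, wadj, Matrix.conjTranspose_mul, Matrix.mul_assoc]
    rw [h1']
    simp only [hNc]
  have factor : Matrix.fromBlocks (A * B) (A * wadj M N A * (A * B))
      (A * B * (wadj N L B * B)) (A * B * wadj M L (A * B) * (A * B)) =
      Matrix.fromRows 1 P * ((A * B) * Matrix.fromCols 1 Q) := by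
    rw [Matrix.mul_fromCols, Matrix.fromRows_mul_fromCols]
    rw [e12, e21, e22]
    simp only [Matrix.one_mul, Matrix.mul_one, Matrix.mul_assoc]
  have hle1 : (Matrix.fromBlocks (A * B) (A * wadj M N A * (A * B))
      (A * B * (wadj N L B * B)) (A * B * wadj M L (A * B) * (A * B))).rank ≤ (A * B).rank := by
    rw [factor]
    exact le_trans (Matrix.rank_mul_le_right _ _) (Matrix.rank_mul_le_left _ _)
  have recover : Matrix.fromCols (1 : Matrix (Fin m) (Fin m) ℂ) (0 : Matrix (Fin m) (Fin m) ℂ) * (Matrix.fromBlocks (A * B) (A * wadj M N A * (A * B))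
      (A * B * (wadj N L B * B)) (A * B * wadj M L (A * B) * (A * B))) * Matrix.fromRows (1 : Matrix (Fin l) (Fin l) ℂ) (0 : Matrix (Fin l) (Fin l) ℂ)
      = A * B := by
    rw [factor, ← Matrix.mul_assoc, ← Matrix.mul_assoc, Matrix.fromCols_mul_fromRows]
    simp only [Matrix.one_mul, Matrix.zero_mul, add_zero]
    rw [Matrix.mul_assoc, Matrix.mul_assoc, Matrix.fromCols_mul_fromRows]
    simp
  have hle2 : (A * B).rank ≤ (Matrix.fromBlocks (A * B) (A * wadj M N A * (A * B))
      (A * B * (wadj N L B * B)) (A * B * wadj M L (A * B) * (A * B))).rank := by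
    conv_lhs => rw [← recover]
    exact le_trans (Matrix.rank_mul_le_left _ _) (Matrix.rank_mul_le_right _ _)
  exact le_antisymm hle1 hle2
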